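/- Let S and A be finite nonempty sets, p : S × A × S → ℝ with p(j|i,a) ≥ 0 and Σ_{j∈S} p(j|i,a) = 1 for all (i,a), 0 ≤ γ < 1, and N > 0. The map Q ↦ J_U(Q), where J_U(Q)((i,a),(k,c)) = γ·p(k|i,a)·e^{N·Q(k,c)}/(Σ_{b∈A} e^{N·Q(k,b)}), is Lipschitz continuous: there exists a constant L > 0 (depending on N, γ and |A|) such that for all P, Q : S × A → ℝ, ‖J_U(P) − J_U(Q)‖ ≤ L·‖P − Q‖, where ‖·‖ on matrices denotes the operator norm induced by the sup norm and ‖P − Q‖ = max_{(i,a)} |P(i,a) − Q(i,a)|. -/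
import Mathlib


/-- The Jacobian matrix of the modified Bellman operator:
`J_U(Q)((i,a),(k,c)) = γ·p(k|i,a)·e^{N·Q(k,c)} / Σ_b e^{N·Q(k,b)}`. -/
noncomputable def jacU {S A : Type*} [Fintype A]
    (p : S → A → S → ℝ) (γ N : ℝ) (Q : S → A → ℝ) : Matrix (S × A) (S × A) ℝ :=
  Matrix.of fun ia kc =>
    γ * p ia.1 ia.2 kc.1 * (Real.exp (N * Q kc.1 kc.2) / ∑ b, Real.exp (N * Q kc.1 b))

/-- Operator norm induced by the sup norm: the maximum absolute row sum. -/
noncomputable def maxRowSumNorm {S A : Type*} [Fintype S] [Fintype A]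
    [Nonempty S] [Nonempty A] (M : Matrix (S × A) (S × A) ℝ) : ℝ :=
  Finset.univ.sup' Finset.univ_nonempty (fun ia : S × A => ∑ kc : S × A, |M ia kc|)

/-- Sup norm of a Q-function: `‖Q‖ = max_{(i,a)} |Q(i,a)|`. -/
noncomputable def qSupNorm {S A : Type*} [Fintype S] [Fintype A] [Nonempty S] [Nonempty A]
    (Q : S → A → ℝ) : ℝ :=
  Finset.univ.sup' Finset.univ_nonempty (fun ia : S × A => |Q ia.1 ia.2|)

lemma abs_exp_sub_one_le' (t : ℝ) : |Real.exp t - 1| ≤ |t| * Real.exp |t| := by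
  rcases le_or_gt 0 t with ht | ht
  · rw [abs_of_nonneg ht, abs_of_nonneg (sub_nonneg.mpr (Real.one_le_exp ht))]
    have h1 := Real.add_one_le_exp (-t)
    have h2 : Real.exp (-t) * Real.exp t = 1 := by rw [← Real.exp_add]; simp
    nlinarith [Real.exp_pos t]
  · have h1 := Real.add_one_le_exp t
    have h2 : Real.exp t ≤ 1 := Real.exp_le_one_iff.mpr ht.le
    rw [abs_of_neg ht, abs_of_nonpos (by linarith)]
    have h3 : (1:ℝ) ≤ Real.exp (-t) := Real.one_le_exp (by linarith)
    nlinarith [Real.exp_pos t]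

lemma softmax_lip {A : Type*} [Fintype A] [Nonempty A] {N : ℝ} (hN : 0 < N)
    (f g : A → ℝ) (c : A) (D : ℝ) (hD0 : 0 ≤ D) (hD : ∀ b, |f b - g b| ≤ D) :
    |Real.exp (N * f c) / ∑ b, Real.exp (N * f b)
      - Real.exp (N * g c) / ∑ b, Real.exp (N * g b)|
      ≤ (1 + 2 * N * Real.exp N) * D := by
  set X := ∑ b, Real.exp (N * f b) with hX
  set Y := ∑ b, Real.exp (N * g b) with hY
  have hXpos : 0 < X := Finset.sum_pos (fun b _ => Real.exp_pos _) Finset.univ_nonempty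
  have hYpos : 0 < Y := Finset.sum_pos (fun b _ => Real.exp_pos _) Finset.univ_nonempty
  have hxc : Real.exp (N * f c) ≤ X :=
    Finset.single_le_sum (f := fun b => Real.exp (N * f b))
      (fun b _ => (Real.exp_pos _).le) (Finset.mem_univ c)
  have hyc : Real.exp (N * g c) ≤ Y :=
    Finset.single_le_sum (f := fun b => Real.exp (N * g b))
      (fun b _ => (Real.exp_pos _).le) (Finset.mem_univ c)
  have hC : (1:ℝ) ≤ 1 + 2 * N * Real.exp N := by nlinarith [Real.exp_pos N]
  rcases le_or_gt 1 D with h1 | h1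
  · have ha : Real.exp (N * f c) / X ≤ 1 := (div_le_one hXpos).mpr hxc
    have hb : Real.exp (N * g c) / Y ≤ 1 := (div_le_one hYpos).mpr hyc
    have ha0 : 0 ≤ Real.exp (N * f c) / X := by positivity
    have hb0 : 0 ≤ Real.exp (N * g c) / Y := by positivity
    have habs : |Real.exp (N * f c) / X - Real.exp (N * g c) / Y| ≤ 1 := by
      rw [abs_sub_le_iff]; constructor <;> linarith
    nlinarith
  · set K := N * D * Real.exp N with hK
    have hK0 : 0 ≤ K := by positivity
    have key : ∀ b, |Real.exp (N * f b) - Real.exp (N * g b)| ≤ Real.exp (N * g b) * K := by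
      intro b
      have heq : Real.exp (N * f b) - Real.exp (N * g b)
          = Real.exp (N * g b) * (Real.exp (N * (f b - g b)) - 1) := by
        rw [mul_sub, ← Real.exp_add]; ring_nf
      rw [heq, abs_mul, abs_of_nonneg (Real.exp_pos _).le]
      have h2 := abs_exp_sub_one_le' (N * (f b - g b))
      have h3 : |N * (f b - g b)| ≤ N * D := by
        rw [abs_mul, abs_of_pos hN]
        exact mul_le_mul_of_nonneg_left (hD b) hN.le
      have h4 : Real.exp |N * (f b - g b)| ≤ Real.exp N := by
        apply Real.exp_le_exp.mpr
        calc |N * (f b - g b)| ≤ N * D := h3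
          _ ≤ N * 1 := by nlinarith
          _ = N := mul_one N
      have h5 : |N * (f b - g b)| * Real.exp |N * (f b - g b)| ≤ N * D * Real.exp N :=
        mul_le_mul h3 h4 (Real.exp_pos _).le (by positivity)
      exact mul_le_mul_of_nonneg_left (le_trans h2 h5) (Real.exp_pos _).le
    have hsum : |Y - X| ≤ Y * K := by
      have : Y - X = ∑ b, (Real.exp (N * g b) - Real.exp (N * f b)) := by
        rw [Finset.sum_sub_distrib]
      rw [this]
      calc |∑ b, (Real.exp (N * g b) - Real.exp (N * f b))|
          ≤ ∑ b, |Real.exp (N * g b) - Real.exp (N * f b)| := Finset.abs_sum_le_sum_abs _ _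
        _ ≤ ∑ b, Real.exp (N * g b) * K := by
            refine Finset.sum_le_sum fun b _ => ?_
            rw [abs_sub_comm]; exact key b
        _ = Y * K := by rw [← Finset.sum_mul]
    have hdecomp : Real.exp (N * f c) / X - Real.exp (N * g c) / Y
        = (Real.exp (N * f c) / X) * ((Y - X) / Y)
          + (Real.exp (N * f c) - Real.exp (N * g c)) / Y := by
      field_simp
      ring
    rw [hdecomp]
    have t1 : |(Real.exp (N * f c) / X) * ((Y - X) / Y)| ≤ K := by
      rw [abs_mul]
      have ha : |Real.exp (N * f c) / X| ≤ 1 := by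
        rw [abs_of_nonneg (by positivity)]
        exact (div_le_one hXpos).mpr hxc
      have hb : |(Y - X) / Y| ≤ K := by
        rw [abs_div, abs_of_pos hYpos, div_le_iff₀ hYpos]
        calc |Y - X| ≤ Y * K := hsum
          _ = K * Y := mul_comm _ _
      calc |Real.exp (N * f c) / X| * |(Y - X) / Y| ≤ 1 * K :=
            mul_le_mul ha hb (abs_nonneg _) zero_le_one
        _ = K := one_mul K
    have t2 : |(Real.exp (N * f c) - Real.exp (N * g c)) / Y| ≤ K := by
      rw [abs_div, abs_of_pos hYpos, div_le_iff₀ hYpos]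
      calc |Real.exp (N * f c) - Real.exp (N * g c)| ≤ Real.exp (N * g c) * K := key c
        _ ≤ Y * K := mul_le_mul_of_nonneg_right hyc hK0
        _ = K * Y := mul_comm _ _
    calc |(Real.exp (N * f c) / X) * ((Y - X) / Y)
          + (Real.exp (N * f c) - Real.exp (N * g c)) / Y|
        ≤ |(Real.exp (N * f c) / X) * ((Y - X) / Y)|
          + |(Real.exp (N * f c) - Real.exp (N * g c)) / Y| := abs_add_le _ _
      _ ≤ K + K := add_le_add t1 t2
      _ = 2 * N * Real.exp N * D := by rw [hK]; ring
      _ ≤ (1 + 2 * N * Real.exp N) * D := by nlinarith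

/-- The map `Q ↦ J_U(Q)` is Lipschitz: there is `L > 0` (depending on `N`, `γ`, `|A|`)
with `‖J_U(P) − J_U(Q)‖ ≤ L·‖P − Q‖` in the induced (max absolute row sum) norm. -/
theorem jacU_lipschitz {S A : Type*} [Fintype S] [Fintype A] [Nonempty S] [Nonempty A]
    (p : S → A → S → ℝ) (hp0 : ∀ i a j, 0 ≤ p i a j) (hp1 : ∀ i a, ∑ j, p i a j = 1)
    (γ : ℝ) (hγ0 : 0 ≤ γ) (hγ1 : γ < 1) (N : ℝ) (hN : 0 < N) :
    ∃ L : ℝ, 0 < L ∧ ∀ P Q : S → A → ℝ,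
      maxRowSumNorm (jacU p γ N P - jacU p γ N Q) ≤
        L * qSupNorm (fun i a => P i a - Q i a) := by
  classical
  set C : ℝ := 1 + 2 * N * Real.exp N with hCdef
  have hCpos : 0 < C := by have := Real.exp_pos N; nlinarith
  set L : ℝ := γ * (Fintype.card A : ℝ) * C + 1 with hLdef
  have hL0 : 0 ≤ γ * (Fintype.card A : ℝ) * C :=
    mul_nonneg (mul_nonneg hγ0 (Nat.cast_nonneg _)) hCpos.le
  refine ⟨L, by rw [hLdef]; linarith, fun P Q => ?_⟩
  set d : ℝ := qSupNorm (fun i a => P i a - Q i a) with hd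
  have hdle : ∀ k c, |P k c - Q k c| ≤ d := fun k c =>
    Finset.le_sup' (fun ia : S × A => |P ia.1 ia.2 - Q ia.1 ia.2|) (Finset.mem_univ (k, c))
  have hd0 : 0 ≤ d := by
    obtain ⟨k, c⟩ := Classical.arbitrary (S × A)
    exact le_trans (abs_nonneg _) (hdle k c)
  apply Finset.sup'_le
  intro ia _
  calc ∑ kc : S × A, |(jacU p γ N P - jacU p γ N Q) ia kc|
      ≤ ∑ kc : S × A, γ * p ia.1 ia.2 kc.1 * (C * d) := by
        refine Finset.sum_le_sum fun kc _ => ?_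
        have hsm := softmax_lip hN (P kc.1) (Q kc.1) kc.2 d hd0 (fun b => hdle kc.1 b)
        have hpq : (jacU p γ N P - jacU p γ N Q) ia kc
            = γ * p ia.1 ia.2 kc.1 *
              (Real.exp (N * P kc.1 kc.2) / ∑ b, Real.exp (N * P kc.1 b)
               - Real.exp (N * Q kc.1 kc.2) / ∑ b, Real.exp (N * Q kc.1 b)) := by
          simp [jacU, Matrix.sub_apply]; ring
        rw [hpq, abs_mul, abs_of_nonneg (mul_nonneg hγ0 (hp0 _ _ _))]
        refine mul_le_mul_of_nonneg_left ?_ (mul_nonneg hγ0 (hp0 _ _ _))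
        rw [← hCdef] at hsm
        calc |Real.exp (N * P kc.1 kc.2) / ∑ b, Real.exp (N * P kc.1 b)
              - Real.exp (N * Q kc.1 kc.2) / ∑ b, Real.exp (N * Q kc.1 b)| ≤ C * d := hsm
          _ = C * d := rfl
    _ = γ * (Fintype.card A : ℝ) * C * d * ∑ k, p ia.1 ia.2 k := by
        rw [Fintype.sum_prod_type, Finset.mul_sum]
        refine Finset.sum_congr rfl fun k _ => ?_
        simp only [Finset.sum_const, Finset.card_univ, nsmul_eq_mul]
        ring
    _ ≤ L * d := by
        rw [hp1, hLdef]
        nlinarith
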